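/- Let G be a topological group, Y a metrizable locally convex real topological vector space, and π a representation of G by continuous linear operators on Y such that the action map G × Y → Y, (g, y) ↦ π(g)y, is continuous and such that there is a neighborhood V of the identity in G for which the family of operators {π(g) : g ∈ V} is equicontinuous. Let V₀ be a real topological vector space which is a Baire space and ι a surjective map from V₀ onto the set of one-parameter subgroups of G such that ι(c·v)(s) = ι(v)(c·s) for all c, s ∈ ℝ and v ∈ V₀, such that ι(v + w) = ι(v) + ι(w) in the Trotter sense for all v, w ∈ V₀, and such that the map V₀ → C(ℝ, G), v ↦ ι(v), is continuous with respect to the compact-open topology on C(ℝ, G). If y ∈ Y is such that dπ(Z)y exists for every one-parameter subgroup Z of G, then the map V₀ → Y, v ↦ dπ(ι(v))y, is ℝ-linear and continuous. -/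

import Mathlib

open Filter Topology Pointwise

/-- A one-parameter subgroup of a topological group `G`: a continuous homomorphism
from the additive group of reals into `G`. -/
structure OneParamSubgroup (G : Type*) [Group G] [TopologicalSpace G] where
  toFun : ℝ → G
  continuous_toFun : Continuous toFun
  map_add : ∀ s t : ℝ, toFun (s + t) = toFun s * toFun t

/-- `X = X₁ + X₂` in the Trotter sense: `(X₁(t/n) X₂(t/n))^n → X(t)` uniformly on
compact subsets of `ℝ`. -/
def TrotterSum {G : Type*} [Group G] [TopologicalSpace G]
    (X X₁ X₂ : OneParamSubgroup G) : Prop :=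
  ∀ K : Set ℝ, IsCompact K → ∀ W ∈ 𝓝 (1 : G), ∃ N : ℕ, ∀ n : ℕ, N ≤ n → ∀ t ∈ K,
    (X.toFun t)⁻¹ * (X₁.toFun (t / (n : ℝ)) * X₂.toFun (t / (n : ℝ))) ^ n ∈ W

/-- `(D_X φ)(g)` exists and equals `z`. -/
def HasDirDerivAt {G Y : Type*} [Group G] [TopologicalSpace G]
    [AddCommGroup Y] [Module ℝ Y] [TopologicalSpace Y]
    (φ : G → Y) (X : OneParamSubgroup G) (g : G) (z : Y) : Prop :=
  Tendsto (fun t : ℝ => t⁻¹ • (φ (g * X.toFun t) - φ g)) (𝓝[≠] (0 : ℝ)) (𝓝 z)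

/-- `φ : G → Y` is locally left uniformly continuous. -/
def LocallyLeftUC {G Y : Type*} [Group G] [TopologicalSpace G]
    [AddCommGroup Y] [TopologicalSpace Y] (φ : G → Y) : Prop :=
  ∀ g₀ : G, ∃ V ∈ 𝓝 g₀, ∀ U ∈ 𝓝 (0 : Y), ∃ W ∈ 𝓝 (1 : G),
    ∀ x ∈ V, ∀ y ∈ V, x⁻¹ * y ∈ W → φ x - φ y ∈ U

/-- `φ` is of class LUC¹, with `D X g = (D_X φ)(g)`. -/
def IsLUC1 {G Y : Type*} [Group G] [TopologicalSpace G]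
    [AddCommGroup Y] [Module ℝ Y] [TopologicalSpace Y]
    (φ : G → Y) (D : OneParamSubgroup G → G → Y) : Prop :=
  LocallyLeftUC φ ∧ (∀ X g, HasDirDerivAt φ X g (D X g)) ∧
    ∀ X, LocallyLeftUC (D X)

lemma OneParamSubgroup.toFun_zero {G : Type*} [Group G] [TopologicalSpace G]
    (X : OneParamSubgroup G) : X.toFun 0 = 1 := by
  have h : X.toFun 0 = X.toFun 0 * X.toFun 0 := by simpa using X.map_add 0 0
  exact (mul_eq_right.mp h.symm)

lemma telescope {G Y : Type*} [Group G] [AddCommGroup Y] [Module ℝ Y] [TopologicalSpace Y]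
    (π : G → Y →L[ℝ] Y) (hπ_one : π 1 = ContinuousLinearMap.id ℝ Y)
    (hπ_mul : ∀ g h : G, π (g * h) = (π g).comp (π h)) (g : G) (y : Y) :
    ∀ n : ℕ, π (g ^ n) y - y = ∑ k ∈ Finset.range n, π (g ^ k) (π g y - y) := by
  intro n
  induction n with
  | zero => simp [hπ_one]
  | succ n ih =>
    rw [pow_succ, hπ_mul, Finset.sum_range_succ, ← ih]
    simp only [ContinuousLinearMap.comp_apply, map_sub]
    abel

lemma trotter_add {G Y : Type*} [Group G] [TopologicalSpace G] [IsTopologicalGroup G]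
    [AddCommGroup Y] [Module ℝ Y] [TopologicalSpace Y] [IsTopologicalAddGroup Y]
    [ContinuousSMul ℝ Y] [LocallyConvexSpace ℝ Y]
    (π : G → Y →L[ℝ] Y) (hπ_one : π 1 = ContinuousLinearMap.id ℝ Y)
    (hπ_mul : ∀ g h : G, π (g * h) = (π g).comp (π h))
    (hπ_cont : Continuous fun p : G × Y => π p.1 p.2)
    (hequi : ∃ V ∈ 𝓝 (1 : G), ∀ U ∈ 𝓝 (0 : Y), ∃ U' ∈ 𝓝 (0 : Y),
      ∀ g ∈ V, ∀ z ∈ U', π g z ∈ U)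
    (X X₁ X₂ : OneParamSubgroup G) (htr : TrotterSum X X₁ X₂)
    (y z₁ z₂ : Y)
    (h1 : Tendsto (fun t : ℝ => t⁻¹ • (π (X₁.toFun t) y - y)) (𝓝[≠] (0:ℝ)) (𝓝 z₁))
    (h2 : Tendsto (fun t : ℝ => t⁻¹ • (π (X₂.toFun t) y - y)) (𝓝[≠] (0:ℝ)) (𝓝 z₂)) :
    Tendsto (fun t : ℝ => t⁻¹ • (π (X.toFun t) y - y)) (𝓝[≠] (0:ℝ)) (𝓝 (z₁ + z₂)) := by
  obtain ⟨V, hV, hVe⟩ := hequi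
  set z := z₁ + z₂ with hz
  have hcontπy : Continuous fun g : G => π g y :=
    hπ_cont.comp (continuous_id.prodMk continuous_const)
  have hcontπz : Continuous fun g : G => π g z :=
    hπ_cont.comp (continuous_id.prodMk continuous_const)
  -- one-step estimate
  have hE : Tendsto (fun s : ℝ => s⁻¹ • (π (X₁.toFun s * X₂.toFun s) y - y))
      (𝓝[≠] (0:ℝ)) (𝓝 z) := by
    have key : ∀ s : ℝ, s⁻¹ • (π (X₁.toFun s * X₂.toFun s) y - y)
        = π (X₁.toFun s) (s⁻¹ • (π (X₂.toFun s) y - y)) + s⁻¹ • (π (X₁.toFun s) y - y) := by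
      intro s
      rw [hπ_mul]
      simp only [ContinuousLinearMap.comp_apply, map_smul, map_sub]
      rw [← smul_add]
      congr 1
      abel
    simp only [key]
    have hX₁0 : Tendsto X₁.toFun (𝓝[≠] (0:ℝ)) (𝓝 (1:G)) := by
      simpa [OneParamSubgroup.toFun_zero] using
        (X₁.continuous_toFun.tendsto 0).mono_left nhdsWithin_le_nhds
    have hfirst : Tendsto (fun s : ℝ => π (X₁.toFun s) (s⁻¹ • (π (X₂.toFun s) y - y)))
        (𝓝[≠] (0:ℝ)) (𝓝 z₂) := by
      have := (hπ_cont.tendsto ((1:G), z₂)).comp (hX₁0.prodMk_nhds h2)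
      simpa only [Function.comp_def, hπ_one, ContinuousLinearMap.id_apply] using this
    have := hfirst.add h1
    rwa [add_comm] at this
  -- reduce to basis statement
  have hbasis : (𝓝[≠] (0:ℝ)).HasBasis (fun ε : ℝ => 0 < ε)
      (fun ε => Metric.ball 0 ε ∩ {x : ℝ | x ≠ 0}) :=
    nhdsWithin_hasBasis Metric.nhds_basis_ball _
  rw [← tendsto_sub_nhds_zero_iff]
  rw [Filter.tendsto_def]
  intro U hU
  -- choose the neighborhoods
  obtain ⟨C, hC, hCclosed, hCU⟩ := exists_mem_nhds_isClosed_subset hU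
  obtain ⟨U₀, hU₀, hU₀C⟩ := exists_nhds_zero_half hC
  obtain ⟨U₁, ⟨hU₁, hU₁conv⟩, hU₁sub⟩ :=
    (LocallyConvexSpace.convex_basis_zero ℝ Y).mem_iff.mp hU₀
  obtain ⟨U₂, hU₂, hU₂V⟩ := hVe U₁ hU₁
  have hmemV₁ : {h : G | π h z - z ∈ U₁} ∈ 𝓝 (1:G) := by
    have hca : ContinuousAt (fun g : G => π g z - z) 1 :=
      (hcontπz.sub continuous_const).continuousAt
    have h0 : (fun g : G => π g z - z) 1 = 0 := by simp [hπ_one]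
    exact hca.preimage_mem_nhds
      (by simp only [hπ_one, ContinuousLinearMap.id_apply, sub_self]; exact hU₁)
  set V₁ : Set G := V ∩ {h : G | π h z - z ∈ U₁} with hV₁def
  have hV₁ : V₁ ∈ 𝓝 (1:G) := Filter.inter_mem hV hmemV₁
  obtain ⟨V₂, hV₂, hV₂mul⟩ := exists_nhds_one_split hV₁
  -- s₀ from the one-step estimate
  have hE' : Tendsto (fun s : ℝ => s⁻¹ • (π (X₁.toFun s * X₂.toFun s) y - y) - z)
      (𝓝[≠] (0:ℝ)) (𝓝 0) := tendsto_sub_nhds_zero_iff.mpr hE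
  obtain ⟨s₀, hs₀pos, hs₀⟩ := hbasis.mem_iff.mp (Filter.tendsto_def.mp hE' U₂ hU₂)
  -- t₁ from continuity of X at 0
  have hXpre : X.toFun ⁻¹' V₂ ∈ 𝓝 (0:ℝ) :=
    X.continuous_toFun.continuousAt.preimage_mem_nhds
      (by rw [OneParamSubgroup.toFun_zero]; exact hV₂)
  obtain ⟨t₁, ht₁pos, ht₁⟩ := Metric.mem_nhds_iff.mp hXpre
  refine hbasis.mem_iff.mpr ⟨min s₀ t₁, lt_min hs₀pos ht₁pos, ?_⟩
  rintro t ⟨htball, htne⟩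
  have htne : t ≠ 0 := htne
  have htabs : |t| < min s₀ t₁ := by
    simpa [Real.dist_eq] using htball
  -- setup for fixed t
  obtain ⟨N₀, hN₀⟩ := htr (Set.Icc (-|t|) |t|) isCompact_Icc V₂ hV₂
  set N := max N₀ 1 with hNdef
  have hsmall : ∀ᶠ n : ℕ in atTop,
      ∀ k < N, (X₁.toFun (t/(n:ℝ)) * X₂.toFun (t/(n:ℝ))) ^ k ∈ V₁ := by
    apply (eventually_all_finite (Set.finite_Iio N)).2
    intro k hk
    have hc : Continuous fun s : ℝ => (X₁.toFun s * X₂.toFun s) ^ k :=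
      (X₁.continuous_toFun.mul X₂.continuous_toFun).pow k
    have hto := (hc.tendsto 0).comp (tendsto_const_div_atTop_nhds_zero_nat t)
    have h0 : (fun s : ℝ => (X₁.toFun s * X₂.toFun s) ^ k) 0 = 1 := by
      simp [OneParamSubgroup.toFun_zero]
    simp only [Function.comp_def, OneParamSubgroup.toFun_zero, mul_one, one_pow] at hto
    exact hto.eventually (eventually_mem_set.mpr hV₁)
  obtain ⟨M, hM⟩ := eventually_atTop.mp hsmall
  -- convergence of approximants
  have hPtend : Tendsto (fun n : ℕ => (X₁.toFun (t/(n:ℝ)) * X₂.toFun (t/(n:ℝ))) ^ n)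
      atTop (𝓝 (X.toFun t)) := by
    have h1' : Tendsto
        (fun n : ℕ => (X.toFun t)⁻¹ * (X₁.toFun (t/(n:ℝ)) * X₂.toFun (t/(n:ℝ))) ^ n)
        atTop (𝓝 (1:G)) := by
      rw [tendsto_atTop']
      intro W hW
      obtain ⟨N', hN'⟩ := htr {t} isCompact_singleton W hW
      exact ⟨N', fun n hn => hN' n hn t rfl⟩
    have h2' := ((continuous_mul_left (X.toFun t)).tendsto 1).comp h1'
    simpa [Function.comp_def, ← mul_assoc] using h2'
  have hatend : Tendsto
      (fun n : ℕ => π ((X₁.toFun (t/(n:ℝ)) * X₂.toFun (t/(n:ℝ))) ^ n) y - y - t • z)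
      atTop (𝓝 (π (X.toFun t) y - y - t • z)) :=
    (((hcontπy.tendsto _).comp hPtend).sub tendsto_const_nhds).sub tendsto_const_nhds
  -- membership of approximants
  have hmem : ∀ᶠ n : ℕ in atTop,
      (π ((X₁.toFun (t/(n:ℝ)) * X₂.toFun (t/(n:ℝ))) ^ n) y - y - t • z) ∈ t • C := by
    rw [eventually_atTop]
    refine ⟨max (max N M) 1, fun n hn => ?_⟩
    have hn1 : 1 ≤ n := le_trans (le_max_right _ _) hn
    have hnN : N ≤ n := le_trans (le_trans (le_max_left N M) (le_max_left _ _)) hn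
    have hnM : M ≤ n := le_trans (le_trans (le_max_right N M) (le_max_left _ _)) hn
    have hn0 : (n:ℝ) ≠ 0 := Nat.cast_ne_zero.mpr (by omega)
    set s : ℝ := t / (n:ℝ) with hsdef
    have hsne : s ≠ 0 := div_ne_zero htne hn0
    set g : G := X₁.toFun s * X₂.toFun s with hgdef
    have hsabs : |s| ≤ |t| := by
      rw [hsdef, abs_div]
      rw [abs_of_nonneg (by positivity : (0:ℝ) ≤ (n:ℝ))]
      calc |t| / (n:ℝ) ≤ |t| / 1 := by
            apply div_le_div_of_nonneg_left (abs_nonneg t) one_pos ?_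
            exact_mod_cast hn1
        _ = |t| := div_one _
    -- all powers land in V₁
    have hgk : ∀ k < n, g ^ k ∈ V₁ := by
      intro k hk
      rcases lt_or_ge k N with hkN | hkN
      · exact hM n hnM k hkN
      · have hk1 : 1 ≤ k := le_trans (le_trans (le_max_right N₀ 1) le_rfl) hkN
        have hk0 : (k:ℝ) ≠ 0 := Nat.cast_ne_zero.mpr (by omega)
        set s' : ℝ := (k:ℝ) * t / (n:ℝ) with hs'def
        have hs'abs : |s'| ≤ |t| := by
          rw [hs'def, abs_div, abs_mul]
          rw [abs_of_nonneg (by positivity : (0:ℝ) ≤ (n:ℝ)),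
            abs_of_nonneg (by positivity : (0:ℝ) ≤ (k:ℝ))]
          rw [div_le_iff₀ (by positivity : (0:ℝ) < (n:ℝ))]
          calc (k:ℝ) * |t| ≤ (n:ℝ) * |t| := by
                apply mul_le_mul_of_nonneg_right _ (abs_nonneg t)
                exact_mod_cast le_of_lt hk
            _ = |t| * (n:ℝ) := mul_comm _ _
        have hs'K : s' ∈ Set.Icc (-|t|) |t| := abs_le.mp hs'abs
        have htrk := hN₀ k (le_trans (le_max_left N₀ 1) hkN) s' hs'K
        have hdiv : s' / (k:ℝ) = s := by
          rw [hs'def, hsdef]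
          field_simp
        rw [hdiv] at htrk
        have hXs' : X.toFun s' ∈ V₂ := by
          apply ht₁
          simp only [Metric.mem_ball, Real.dist_eq, sub_zero]
          exact lt_of_le_of_lt hs'abs (lt_of_lt_of_le htabs (min_le_right _ _))
        have hge : g ^ k = X.toFun s' * ((X.toFun s')⁻¹ * g ^ k) :=
          (mul_inv_cancel_left _ _).symm
        rw [hge]
        exact hV₂mul _ hXs' _ htrk
    -- the one-step estimate at s
    have hbU₂ : s⁻¹ • (π g y - y) - z ∈ U₂ := by
      apply hs₀
      constructor
      · simp only [Metric.mem_ball, Real.dist_eq, sub_zero]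
        exact lt_of_le_of_lt hsabs (lt_of_lt_of_le htabs (min_le_left _ _))
      · exact hsne
    -- algebraic identity
    have hexp := telescope π hπ_one hπ_mul g y n
    have hts : t * (n:ℝ)⁻¹ = s := by rw [hsdef]; ring
    have hA : π (g ^ n) y - y - t • z =
        t • (((n:ℝ)⁻¹ • ∑ k ∈ Finset.range n, π (g ^ k) (s⁻¹ • (π g y - y) - z))
          + ((n:ℝ)⁻¹ • ∑ k ∈ Finset.range n, (π (g ^ k) z - z))) := by
      have hterm : ∀ k : ℕ,
          s • (π (g ^ k) (s⁻¹ • (π g y - y) - z)) + s • (π (g ^ k) z - z)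
            = π (g ^ k) (π g y - y) - s • z := by
        intro k
        rw [map_sub ((π (g ^ k))), map_smul, smul_sub s, smul_sub s,
          smul_inv_smul₀ hsne]
        abel
      have hsum : (∑ k ∈ Finset.range n,
            (s • (π (g ^ k) (s⁻¹ • (π g y - y) - z)) + s • (π (g ^ k) z - z)))
          = ∑ k ∈ Finset.range n, (π (g ^ k) (π g y - y) - s • z) :=
        Finset.sum_congr rfl (fun k _ => hterm k)
      conv_rhs => rw [smul_add, smul_smul, smul_smul, hts, Finset.smul_sum,
        Finset.smul_sum, ← Finset.sum_add_distrib, hsum]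
      rw [hexp, Finset.sum_sub_distrib, Finset.sum_const, Finset.card_range]
      congr 1
      rw [← Nat.cast_smul_eq_nsmul ℝ n (s • z), smul_smul]
      congr 1
      rw [hsdef]
      field_simp
    rw [hA]
    apply Set.smul_mem_smul_set
    apply hU₀C
    · apply hU₁sub
      rw [Finset.smul_sum]
      apply hU₁conv.sum_mem (fun i _ => by positivity) ?_
        (fun k hk => hU₂V (g ^ k) ((hgk k (Finset.mem_range.mp hk)).1) _ hbU₂)
      rw [Finset.sum_const, Finset.card_range, nsmul_eq_mul]
      field_simp
    · apply hU₁sub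
      rw [Finset.smul_sum]
      apply hU₁conv.sum_mem (fun i _ => by positivity) ?_
        (fun k hk => (hgk k (Finset.mem_range.mp hk)).2)
      rw [Finset.sum_const, Finset.card_range, nsmul_eq_mul]
      field_simp
  -- pass to the limit
  have hclosed : IsClosed (t • C) := hCclosed.smul_of_ne_zero htne
  have hmemlim : (π (X.toFun t) y - y - t • z) ∈ t • C :=
    hclosed.mem_of_tendsto hatend hmem
  obtain ⟨c, hcC, hce⟩ := hmemlim
  show t⁻¹ • (π (X.toFun t) y - y) - z ∈ U
  have e1 : t⁻¹ • (π (X.toFun t) y - y - t • z)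
      = t⁻¹ • (π (X.toFun t) y - y) - z := by
    rw [smul_sub t⁻¹ (π (X.toFun t) y - y) (t • z), inv_smul_smul₀ htne]
  rw [← e1, ← hce]
  simpa [inv_smul_smul₀ htne] using hCU hcC

theorem dPi_linear_continuous
    {G Y V₀ : Type*} [Group G] [TopologicalSpace G] [IsTopologicalGroup G]
    [AddCommGroup Y] [Module ℝ Y] [TopologicalSpace Y] [IsTopologicalAddGroup Y]
    [ContinuousSMul ℝ Y] [LocallyConvexSpace ℝ Y] [TopologicalSpace.MetrizableSpace Y]
    [AddCommGroup V₀] [Module ℝ V₀] [TopologicalSpace V₀] [IsTopologicalAddGroup V₀]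
    [ContinuousSMul ℝ V₀] [BaireSpace V₀]
    (π : G → Y →L[ℝ] Y)
    (hπ_one : π 1 = ContinuousLinearMap.id ℝ Y)
    (hπ_mul : ∀ g h : G, π (g * h) = (π g).comp (π h))
    (hπ_cont : Continuous fun p : G × Y => π p.1 p.2)
    (hequi : ∃ V ∈ 𝓝 (1 : G), ∀ U ∈ 𝓝 (0 : Y), ∃ U' ∈ 𝓝 (0 : Y),
      ∀ g ∈ V, ∀ z ∈ U', π g z ∈ U)
    (ι : V₀ → OneParamSubgroup G) (hι_surj : Function.Surjective ι)
    (hscal : ∀ (c : ℝ) (v : V₀) (s : ℝ), (ι (c • v)).toFun s = (ι v).toFun (c * s))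
    (hadd : ∀ v w : V₀, TrotterSum (ι (v + w)) (ι v) (ι w))
    (hιcont : Continuous fun v : V₀ =>
      (⟨(ι v).toFun, (ι v).continuous_toFun⟩ : C(ℝ, G)))
    (y : Y) (D : V₀ → Y)
    (hD : ∀ v : V₀,
      Tendsto (fun t : ℝ => t⁻¹ • (π ((ι v).toFun t) y - y)) (𝓝[≠] (0 : ℝ)) (𝓝 (D v))) :
    IsLinearMap ℝ D ∧ Continuous D := by
  have haddD : ∀ v w : V₀, D (v + w) = D v + D w := fun v w =>
    tendsto_nhds_unique (hD (v + w))
      (trotter_add π hπ_one hπ_mul hπ_cont hequi _ _ _ (hadd v w) y _ _ (hD v) (hD w))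
  -- scalar multiplication
  have hsm : ∀ (c : ℝ) (v : V₀), D (c • v) = c • D v := by
    intro c v
    rcases eq_or_ne c 0 with rfl | hc
    · have h0 : Tendsto (fun t : ℝ => t⁻¹ • (π ((ι ((0:ℝ) • v)).toFun t) y - y))
          (𝓝[≠] (0:ℝ)) (𝓝 0) := by
        have he : ∀ t : ℝ, π ((ι ((0:ℝ) • v)).toFun t) y - y = 0 := by
          intro t
          rw [hscal, zero_mul, OneParamSubgroup.toFun_zero, hπ_one]
          simp
        simp only [he, smul_zero]
        exact tendsto_const_nhds
      rw [tendsto_nhds_unique (hD _) h0, zero_smul]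
    · apply tendsto_nhds_unique (hD (c • v))
      have hcomp : Tendsto (fun t : ℝ => c * t) (𝓝[≠] (0:ℝ)) (𝓝[≠] (0:ℝ)) := by
        refine tendsto_nhdsWithin_of_tendsto_nhds_of_eventually_within _ ?_ ?_
        · have : Tendsto (fun t : ℝ => c * t) (𝓝 0) (𝓝 0) := by
            simpa using (continuous_mul_left c).tendsto (0:ℝ)
          exact this.mono_left nhdsWithin_le_nhds
        · exact eventually_mem_nhdsWithin.mono (fun t ht => mul_ne_zero hc ht)
      have hcmp := ((hD v).comp hcomp).const_smul c
      refine Tendsto.congr (fun t => ?_) hcmp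
      simp only [Function.comp_def, hscal]
      rw [smul_smul, mul_inv, mul_inv_cancel_left₀ hc]
  have hlin : IsLinearMap ℝ D := ⟨haddD, fun c v => hsm c v⟩
  refine ⟨hlin, ?_⟩
  have hD0 : D 0 = 0 := by
    have := hsm 0 0
    rwa [zero_smul, zero_smul] at this
  -- approximating sequence
  set f : ℕ → V₀ → Y := fun n v =>
    ((n:ℝ) + 1) • (π ((ι v).toFun (((n:ℝ) + 1)⁻¹)) y - y) with hfdef
  have hfc : ∀ n, Continuous (f n) := by
    intro n
    have hev : Continuous fun v : V₀ => (ι v).toFun (((n:ℝ) + 1)⁻¹) :=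
      (continuous_eval_const (((n:ℝ) + 1)⁻¹)).comp hιcont
    exact ((hπ_cont.comp (hev.prodMk continuous_const)).sub continuous_const).const_smul _
  have hfl : ∀ v, Tendsto (fun n => f n v) atTop (𝓝 (D v)) := by
    intro v
    have h1 : Tendsto (fun n : ℕ => ((n:ℝ) + 1)⁻¹) atTop (𝓝[≠] (0:ℝ)) := by
      refine tendsto_nhdsWithin_of_tendsto_nhds_of_eventually_within _ ?_ ?_
      · exact tendsto_one_div_add_atTop_nhds_zero_nat.congr (fun n => by rw [one_div])
      · exact Eventually.of_forall
          (fun n => by show ((n:ℝ) + 1)⁻¹ ≠ 0; positivity)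
    have hcmp := (hD v).comp h1
    refine Tendsto.congr (fun n => ?_) hcmp
    simp only [Function.comp_def, inv_inv, hfdef]
  -- it suffices to prove continuity at 0
  suffices hc0 : ContinuousAt D 0 by
    rw [continuous_iff_continuousAt]
    intro v₀
    have hrepr : ∀ v : V₀, D v = D v₀ + D (v - v₀) := by
      intro v
      rw [← haddD, add_sub_cancel]
    rw [show D = fun v => D v₀ + D (v - v₀) from funext hrepr]
    apply ContinuousAt.add continuousAt_const
    have hsubc : ContinuousAt (fun v : V₀ => v - v₀) v₀ :=
      (continuous_id.sub continuous_const).continuousAt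
    exact ContinuousAt.comp (by rw [sub_self]; exact hc0 :
      ContinuousAt D (v₀ - v₀)) hsubc
  -- continuity at 0 via Baire category
  rw [ContinuousAt, hD0, Filter.tendsto_def]
  intro U hU
  obtain ⟨W₁, hW₁, hW₁U⟩ := exists_nhds_zero_half hU
  obtain ⟨W₂, hW₂, hW₂W₁⟩ := exists_nhds_zero_half hW₁
  have hW₂W₁' : W₂ ⊆ W₁ := fun w hw => by
    simpa using hW₂W₁ w hw 0 (mem_of_mem_nhds hW₂)
  obtain ⟨Cc, hCc, hCccl, hCcsub⟩ := exists_mem_nhds_isClosed_subset hW₂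
  set C' : Set Y := Cc ∩ (-Cc) with hC'def
  have hnegCc : (-Cc) ∈ 𝓝 (0:Y) := by
    have : (fun y : Y => -y) ⁻¹' Cc ∈ 𝓝 (0:Y) :=
      continuous_neg.continuousAt.preimage_mem_nhds (by simpa using hCc)
    simpa [Set.neg_preimage] using this
  have hC' : C' ∈ 𝓝 (0:Y) := Filter.inter_mem hCc hnegCc
  have hC'cl : IsClosed C' := hCccl.inter (hCccl.preimage continuous_neg)
  have hC'sym : ∀ x ∈ C', -x ∈ C' := by
    rintro x ⟨hx1, hx2⟩
    exact ⟨hx2, by simpa using hx1⟩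
  have hC'W₂ : C' ⊆ W₂ := fun x hx => hCcsub hx.1
  -- C₂ with C₂ - C₂ ⊆ C'
  obtain ⟨C₁, hC₁, hC₁h⟩ := exists_nhds_zero_half hC'
  have hnegC₁ : (fun y : Y => -y) ⁻¹' C₁ ∈ 𝓝 (0:Y) :=
    continuous_neg.continuousAt.preimage_mem_nhds (by simpa using hC₁)
  set C₂ : Set Y := C₁ ∩ ((fun y : Y => -y) ⁻¹' C₁) with hC₂def
  have hC₂ : C₂ ∈ 𝓝 (0:Y) := Filter.inter_mem hC₁ hnegC₁
  have hC₂sub : ∀ a ∈ C₂, ∀ b ∈ C₂, a - b ∈ C' := by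
    intro a ha b hb
    have := hC₁h a ha.1 (-b) hb.2
    rwa [← sub_eq_add_neg] at this
  -- the closed sets E N
  set E : ℕ → Set V₀ := fun N => ⋂ n : ℕ, {v | f (n + N) v - f N v ∈ C'} with hEdef
  have hEclosed : ∀ N, IsClosed (E N) :=
    fun N => isClosed_iInter fun n => hC'cl.preimage ((hfc (n + N)).sub (hfc N))
  have hEcover : ⋃ N, E N = Set.univ := by
    rw [Set.eq_univ_iff_forall]
    intro v
    have hev : ∀ᶠ n in atTop, f n v - D v ∈ C₂ := by
      have : Tendsto (fun n => f n v - D v) atTop (𝓝 0) :=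
        tendsto_sub_nhds_zero_iff.mpr (hfl v)
      exact this.eventually (eventually_mem_set.mpr hC₂)
    obtain ⟨N, hN⟩ := eventually_atTop.mp hev
    refine Set.mem_iUnion.mpr ⟨N, Set.mem_iInter.mpr fun n => ?_⟩
    have h1 := hN (n + N) (Nat.le_add_left N n)
    have h2 := hN N le_rfl
    have := hC₂sub _ h1 _ h2
    simpa [sub_sub_sub_cancel_right] using this
  -- Baire
  obtain ⟨N, hNne⟩ := nonempty_interior_of_iUnion_of_closed hEclosed hEcover
  obtain ⟨v₀, hv₀⟩ := hNne
  -- limit membership on E N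
  have hElim : ∀ u ∈ E N, D u - f N u ∈ C' := by
    intro u hu
    have htend : Tendsto (fun n : ℕ => f (n + N) u - f N u) atTop (𝓝 (D u - f N u)) := by
      have : Tendsto (fun n : ℕ => f (n + N) u) atTop (𝓝 (D u)) :=
        (hfl u).comp (tendsto_add_atTop_nat N)
      exact this.sub tendsto_const_nhds
    exact hC'cl.mem_of_tendsto htend
      (Eventually.of_forall fun n => Set.mem_iInter.mp hu n)
  -- neighborhoods of 0 in V₀
  have hΩ' : (fun u : V₀ => u + v₀) ⁻¹' interior (E N) ∈ 𝓝 (0:V₀) :=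
    (continuous_id.add continuous_const).continuousAt.preimage_mem_nhds
      (by simpa using mem_interior_iff_mem_nhds.mp hv₀)
  have hΩ'' : {u : V₀ | f N (u + v₀) - f N v₀ ∈ C'} ∈ 𝓝 (0:V₀) := by
    have hca : ContinuousAt (fun u : V₀ => f N (u + v₀) - f N v₀) 0 :=
      (((hfc N).comp (continuous_id.add continuous_const)).sub continuous_const).continuousAt
    exact hca.preimage_mem_nhds (by simpa using hC')
  refine Filter.mem_of_superset (Filter.inter_mem hΩ' hΩ'') ?_
  rintro u ⟨hu1, hu2⟩
  have huE : u + v₀ ∈ E N := interior_subset hu1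
  have hv₀E : v₀ ∈ E N := interior_subset hv₀
  have ha : D (u + v₀) - f N (u + v₀) ∈ C' := hElim _ huE
  have hbm : f N (u + v₀) - f N v₀ ∈ C' := hu2
  have hcm : f N v₀ - D v₀ ∈ C' := by
    have := hC'sym _ (hElim _ hv₀E)
    rwa [neg_sub] at this
  have hDu : D u = (D (u + v₀) - f N (u + v₀)) + (f N (u + v₀) - f N v₀)
      + (f N v₀ - D v₀) := by
    have h1 : D (u + v₀) = D u + D v₀ := haddD u v₀
    rw [h1]; abel
  show D u ∈ U
  rw [hDu]
  exact hW₁U _ (hW₂W₁ _ (hC'W₂ ha) _ (hC'W₂ hbm)) _ (hW₂W₁' (hC'W₂ hcm))
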